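/- Let r ≥ 3 and let G be a C_{1r}-free linear r-graph with an edge e = {u_1,...,u_r} where d(u_1) = d(u_2) = (r-1)^2 + 1 and d(u_i) ≥ (r-1)^2 for 3 ≤ i ≤ r. Define the bipartite graph H_2 whose two sides are the u_2-edges other than e and the u_1-edges other than e, with adjacency given by nonempty intersection. Then H_2 is (r-1)-regular with both sides of size (r-1)^2, and H_2 contains a complete bipartite subgraph K_{r-1,r-1}. -/

import Mathlib

open Finset

/-- A linear `r`-uniform hypergraph: every edge has `r` vertices and
any two distinct edges intersect in at most one vertex. -/
def IsLinear {V : Type*} [DecidableEq V] (r : ℕ) (E : Finset (Finset V)) : Prop :=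
  (∀ e ∈ E, e.card = r) ∧ ∀ e ∈ E, ∀ f ∈ E, e ≠ f → (e ∩ f).card ≤ 1

/-- The degree of a vertex: the number of edges containing it. -/
def degree {V : Type*} [DecidableEq V] (E : Finset (Finset V)) (v : V) : ℕ :=
  (E.filter (fun e => v ∈ e)).card

/-- `E` contains a copy of the `r`-crown `C_{1r}`: `r` pairwise disjoint edges
together with one edge meeting each of them in exactly one vertex. -/
def HasCrown {V : Type*} [DecidableEq V] (r : ℕ) (E : Finset (Finset V)) : Prop :=
  ∃ e ∈ E, ∃ f : Fin r → Finset V,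
    (∀ i, f i ∈ E) ∧ (∀ i, f i ≠ e) ∧
    (∀ i j, i ≠ j → f i ∩ f j = ∅) ∧
    (∀ i, (e ∩ f i).card = 1)

/-- `E` contains a copy of `C*`: `r-2` edges pairwise meeting exactly in a common
vertex `v`, two further edges disjoint from each other and from all the others,
and one edge meeting each of the `r` edges in exactly one vertex, avoiding `v`. -/
def HasCStar {V : Type*} [DecidableEq V] (r : ℕ) (E : Finset (Finset V)) : Prop :=
  ∃ v : V, ∃ e ∈ E, ∃ f : Fin r → Finset V,
    (∀ i, f i ∈ E) ∧ (∀ i, f i ≠ e) ∧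
    (∀ i : Fin r, (i : ℕ) < r - 2 → v ∈ f i) ∧
    (∀ i j : Fin r, (i : ℕ) < r - 2 → (j : ℕ) < r - 2 → i ≠ j → f i ∩ f j = {v}) ∧
    (∀ i j : Fin r, r - 2 ≤ (i : ℕ) → i ≠ j → f i ∩ f j = ∅) ∧
    (∀ i, (e ∩ f i).card = 1) ∧ v ∉ e

section Helpers
variable {V : Type*} [DecidableEq V] {r : ℕ} {E : Finset (Finset V)}

/-- Two edges sharing two distinct vertices coincide. -/
lemma two_mem_eq (hlin : IsLinear r E) {h h' : Finset V} (hh : h ∈ E) (hh' : h' ∈ E)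
    {x y : V} (hxy : x ≠ y) (hxh : x ∈ h) (hyh : y ∈ h) (hxh' : x ∈ h') (hyh' : y ∈ h') :
    h = h' := by
  by_contra hne
  have h1 := hlin.2 h hh h' hh' hne
  have hsub : ({x, y} : Finset V) ⊆ h ∩ h' := by
    intro z hz
    rcases Finset.mem_insert.mp hz with rfl | hz
    · exact Finset.mem_inter.mpr ⟨hxh, hxh'⟩
    · rcases Finset.mem_singleton.mp hz with rfl
      exact Finset.mem_inter.mpr ⟨hyh, hyh'⟩
  have h2 : ({x, y} : Finset V).card = 2 := by
    rw [Finset.card_insert_of_notMem (by simpa using hxy), Finset.card_singleton]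
  have := Finset.card_le_card hsub
  omega

/-- An edge through a vertex of `e` meets `e` exactly there. -/
lemma inter_singleton (hlin : IsLinear r E) {h e : Finset V} (hh : h ∈ E) (he : e ∈ E)
    (hne : h ≠ e) {x : V} (hxh : x ∈ h) (hxe : x ∈ e) : h ∩ e = {x} := by
  have h1 := hlin.2 h hh e he hne
  apply Finset.eq_singleton_iff_unique_mem.mpr
  refine ⟨Finset.mem_inter.mpr ⟨hxh, hxe⟩, fun t ht => ?_⟩
  exact Finset.card_le_one.mp h1 t ht x (Finset.mem_inter.mpr ⟨hxh, hxe⟩)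

/-- The number of edges through `p` meeting a vertex set `S` not containing `p`
is at most `|S|`. -/
lemma banned_le (hlin : IsLinear r E) (p : V) (S : Finset V) (hp : p ∉ S) :
    (E.filter (fun h => p ∈ h ∧ (h ∩ S).Nonempty)).card ≤ S.card := by
  rcases S.eq_empty_or_nonempty with rfl | ⟨s0, hs0⟩
  · simp
  · apply Finset.card_le_card_of_injOn
      (fun h => if hne : (h ∩ S).Nonempty then hne.choose else s0)
    · intro h hh
      simp only [Finset.coe_filter, Set.mem_setOf_eq] at hh
      dsimp only
      rw [Finset.mem_coe, dif_pos hh.2.2]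
      exact (Finset.mem_inter.mp hh.2.2.choose_spec).2
    · intro h hh h' hh' heq
      simp only [Finset.coe_filter, Set.mem_setOf_eq] at hh hh'
      dsimp only at heq
      rw [dif_pos hh.2.2, dif_pos hh'.2.2] at heq
      have c1 := hh.2.2.choose_spec
      have c2 := hh'.2.2.choose_spec
      rw [Finset.mem_inter] at c1 c2
      rw [heq] at c1
      have hyS : hh'.2.2.choose ∈ S := c2.2
      exact two_mem_eq hlin hh.1 hh'.1 (fun hpe => hp (by rw [hpe]; exact hyS))
        hh.2.1 c1.1 hh'.2.1 c2.1

/-- If the degree of `x` is large enough, there is an edge through `x`,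
different from `e`, avoiding `S`. -/
lemma exists_good (hlin : IsLinear r E) {e : Finset V} (he : e ∈ E) {x : V}
    (S : Finset V) (hxS : x ∉ S) (hc : S.card + 1 < degree E x) :
    ∃ h ∈ E, x ∈ h ∧ h ≠ e ∧ h ∩ S = ∅ := by
  by_contra hno
  push_neg at hno
  have hsub : E.filter (fun h => x ∈ h) ⊆
      insert e (E.filter (fun h => x ∈ h ∧ (h ∩ S).Nonempty)) := by
    intro h hh
    rw [Finset.mem_filter] at hh
    rcases eq_or_ne h e with rfl | hne
    · exact Finset.mem_insert_self _ _
    · refine Finset.mem_insert_of_mem (Finset.mem_filter.mpr ⟨hh.1, hh.2, ?_⟩)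
      rcases Finset.eq_empty_or_nonempty (h ∩ S) with hemp | hne'
      · exact absurd hemp (Finset.nonempty_iff_ne_empty.mp (hno h hh.1 hh.2 hne))
      · exact hne'
  have h1 := Finset.card_le_card hsub
  have h2 := Finset.card_insert_le e (E.filter (fun h => x ∈ h ∧ (h ∩ S).Nonempty))
  have h3 := banned_le hlin x S hxS
  unfold degree at hc
  omega

/-- Disjointness of two edges meeting `e` in distinct single vertices, given
that they do not meet outside `e`. -/
lemma disj_of {e h h' : Finset V} {a b : V} (hhe : h ∩ e = {a}) (hh'e : h' ∩ e = {b})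
    (hab : a ≠ b) (hoff : ∀ y ∈ h, y ∈ h' → y ∉ e → False) : h ∩ h' = ∅ := by
  rw [Finset.eq_empty_iff_forall_notMem]
  intro y hy
  rw [Finset.mem_inter] at hy
  by_cases hye : y ∈ e
  · have h1 : y = a := by
      have : y ∈ h ∩ e := Finset.mem_inter.mpr ⟨hy.1, hye⟩
      rw [hhe] at this; simpa using this
    have h2 : y = b := by
      have : y ∈ h' ∩ e := Finset.mem_inter.mpr ⟨hy.2, hye⟩
      rw [hh'e] at this; simpa using this
    exact hab (h1 ▸ h2)
  · exact hoff y hy.1 hy.2 hye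

end Helpers

section Greedy
variable {V : Type*} [DecidableEq V] {r : ℕ} {E : Finset (Finset V)}

/-- Greedy choice of pairwise disjoint legs, one through each vertex of `D ⊆ e`,
all avoiding a fixed off-`e` vertex set `T`. -/
lemma greedy (hr : 3 ≤ r) (hlin : IsLinear r E) {e : Finset V} (he : e ∈ E)
    (hdeg : ∀ x ∈ e, (r - 1) ^ 2 ≤ degree E x)
    (T : Finset V) (hTe : ∀ x ∈ T, x ∉ e) (hT : T.card ≤ r - 1) :
    ∀ D : Finset V, D ⊆ e → D.card ≤ r - 2 → ∃ c : V → Finset V,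
      (∀ x ∈ D, c x ∈ E ∧ x ∈ c x ∧ c x ≠ e ∧ c x ∩ T = ∅) ∧
      (∀ x ∈ D, ∀ y ∈ D, x ≠ y → c x ∩ c y = ∅) := by
  intro D
  induction D using Finset.induction_on with
  | empty => exact fun _ _ => ⟨fun _ => ∅, by simp, by simp⟩
  | @insert a s ha ih =>
    intro hsub hcard
    have hscard : s.card + 1 = (insert a s).card := (Finset.card_insert_of_notMem ha).symm
    obtain ⟨c, hc1, hc2⟩ := ih ((Finset.subset_insert a s).trans hsub) (by omega)
    have hae : a ∈ e := hsub (Finset.mem_insert_self a s)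
    set S : Finset V := T ∪ s.biUnion (fun y => c y \ e) with hS
    have hSoff : ∀ y ∈ S, y ∉ e := by
      intro y hy
      rcases Finset.mem_union.mp hy with hy | hy
      · exact hTe y hy
      · obtain ⟨x, hx, hy⟩ := Finset.mem_biUnion.mp hy
        exact (Finset.mem_sdiff.mp hy).2
    have haS : a ∉ S := fun h => hSoff a h hae
    have hcb : ∀ y ∈ s, (c y \ e).card ≤ r - 1 := by
      intro y hy
      have h1 : c y \ e ⊆ (c y).erase y := by
        intro z hz
        rw [Finset.mem_sdiff] at hz
        exact Finset.mem_erase.mpr ⟨fun h => hz.2 (h ▸ hsub (Finset.mem_insert_of_mem hy)),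
          hz.1⟩
      calc (c y \ e).card ≤ ((c y).erase y).card := Finset.card_le_card h1
        _ ≤ r - 1 := by
            rw [Finset.card_erase_of_mem (hc1 y hy).2.1, hlin.1 _ (hc1 y hy).1]
    have hScard : S.card ≤ (r - 1) + s.card * (r - 1) := by
      calc S.card ≤ T.card + (s.biUnion (fun y => c y \ e)).card := Finset.card_union_le _ _
        _ ≤ (r - 1) + (s.biUnion (fun y => c y \ e)).card := by
            exact Nat.add_le_add_right hT _
        _ ≤ (r - 1) + ∑ y ∈ s, (c y \ e).card := by
            exact Nat.add_le_add_left (Finset.card_biUnion_le) _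
        _ ≤ (r - 1) + s.card * (r - 1) := by
            refine Nat.add_le_add_left ?_ _
            calc ∑ y ∈ s, (c y \ e).card ≤ ∑ _y ∈ s, (r - 1) :=
                  Finset.sum_le_sum hcb
              _ = s.card * (r - 1) := by rw [Finset.sum_const, smul_eq_mul]
    have hlt : S.card + 1 < degree E a := by
      have hda := hdeg a hae
      obtain ⟨k, rfl⟩ : ∃ k, r = k + 3 := ⟨r - 3, by omega⟩
      have hs3 : s.card ≤ k := by omega
      have : S.card ≤ (k + 2) + k * (k + 2) := by
        calc S.card ≤ (k + 3 - 1) + s.card * (k + 3 - 1) := hScard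
          _ ≤ (k + 2) + k * (k + 2) := by
              simp only [show k + 3 - 1 = k + 2 from rfl]
              exact Nat.add_le_add_left (Nat.mul_le_mul_right _ hs3) _
      have hsq : (k + 3 - 1) ^ 2 = (k + 2) * (k + 2) := by
        rw [show k + 3 - 1 = k + 2 from rfl, sq]
      nlinarith [hda, this, hsq]
    obtain ⟨h, hhE, hah, hhe, hhS⟩ := exists_good hlin he S haS hlt
    refine ⟨Function.update c a h, ?_, ?_⟩
    · intro x hx
      rcases Finset.mem_insert.mp hx with rfl | hx
      · rw [Function.update_self]
        refine ⟨hhE, hah, hhe, ?_⟩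
        rw [Finset.eq_empty_iff_forall_notMem]
        intro y hy
        rw [Finset.mem_inter] at hy
        have : y ∈ h ∩ S := Finset.mem_inter.mpr ⟨hy.1, Finset.mem_union_left _ hy.2⟩
        rw [hhS] at this; exact absurd this (Finset.notMem_empty y)
      · rw [Function.update_of_ne (fun h => ha (by rw [← h]; exact hx))]
        exact hc1 x hx
    · have key : ∀ x ∈ s, h ∩ c x = ∅ := by
        intro x hx
        have hxe : x ∈ e := hsub (Finset.mem_insert_of_mem hx)
        have hhs : h ∩ e = {a} := inter_singleton hlin hhE he hhe hah hae
        have hcs : c x ∩ e = {x} := inter_singleton hlin (hc1 x hx).1 he (hc1 x hx).2.2.1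
          (hc1 x hx).2.1 hxe
        refine disj_of hhs hcs (fun h => ha (h ▸ hx)) ?_
        intro y hyh hyc hye
        have : y ∈ h ∩ S := Finset.mem_inter.mpr ⟨hyh, Finset.mem_union_right _
          (Finset.mem_biUnion.mpr ⟨x, hx, Finset.mem_sdiff.mpr ⟨hyc, hye⟩⟩)⟩
        rw [hhS] at this; exact absurd this (Finset.notMem_empty y)
      intro x hx y hy hxy
      rcases Finset.mem_insert.mp hx with hxa | hxs
      · rcases Finset.mem_insert.mp hy with hya | hys
        · exact absurd (hxa.trans hya.symm) hxy
        · rw [hxa, Function.update_self,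
            Function.update_of_ne (fun h => ha (by rw [← h]; exact hys))]
          exact key y hys
      · rcases Finset.mem_insert.mp hy with hya | hys
        · rw [hya, Function.update_self,
            Function.update_of_ne (fun h => ha (by rw [← h]; exact hxs)),
            Finset.inter_comm]
          exact key x hxs
        · rw [Function.update_of_ne (fun h => ha (by rw [← h]; exact hxs)),
            Function.update_of_ne (fun h => ha (by rw [← h]; exact hys))]
          exact hc2 x hxs y hys hxy

/-- Build a crown from a system of pairwise disjoint legs through all vertices of `e`. -/
lemma crown_of (hlin : IsLinear r E) {e : Finset V} (he : e ∈ E)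
    (u : Fin r → V) (hmem : ∀ i, u i ∈ e) (hinj : Function.Injective u)
    (G : V → Finset V) (hG : ∀ x ∈ e, G x ∈ E ∧ x ∈ G x ∧ G x ≠ e)
    (hdisj : ∀ x ∈ e, ∀ y ∈ e, x ≠ y → G x ∩ G y = ∅) : HasCrown r E := by
  refine ⟨e, he, fun i => G (u i), fun i => (hG _ (hmem i)).1, fun i => (hG _ (hmem i)).2.2,
    fun i j hij => hdisj _ (hmem i) _ (hmem j) (fun h => hij (hinj h)), fun i => ?_⟩
  show (e ∩ G (u i)).card = 1
  have h1 : (e ∩ G (u i)).card ≤ 1 := by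
    refine hlin.2 e he _ (hG _ (hmem i)).1 ?_
    exact fun h => (hG _ (hmem i)).2.2 h.symm
  have h2 : u i ∈ e ∩ G (u i) := Finset.mem_inter.mpr ⟨hmem i, (hG _ (hmem i)).2.1⟩
  have h3 : 0 < (e ∩ G (u i)).card := Finset.card_pos.mpr ⟨_, h2⟩
  omega

end Greedy

section Partner
variable {V : Type*} [DecidableEq V] {r : ℕ} {E : Finset (Finset V)}

/-- In a crown-free graph with the given degree conditions, every vertex `w ≠ q` of an
edge `f` through `q` is joined to `p` by some edge. -/
lemma exists_partner (hr : 3 ≤ r) (hlin : IsLinear r E) (hfree : ¬ HasCrown r E)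
    {e : Finset V} (he : e ∈ E) (u : Fin r → V) (hmem : ∀ i, u i ∈ e)
    (hinj : Function.Injective u)
    (hdeg : ∀ x ∈ e, (r - 1) ^ 2 ≤ degree E x)
    {p q : V} (hp : p ∈ e) (hq : q ∈ e) (hpq : p ≠ q)
    (hdp : degree E p = (r - 1) ^ 2 + 1)
    {f : Finset V} (hf : f ∈ E) (hqf : q ∈ f) (hfne : f ≠ e)
    {w : V} (hwf : w ∈ f) (hwq : w ≠ q) :
    ∃ h ∈ E, h ≠ e ∧ p ∈ h ∧ w ∈ h := by
  have hecard : e.card = r := hlin.1 e he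
  have hfs : f ∩ e = {q} := inter_singleton hlin hf he hfne hqf hq
  have hwe : w ∉ e := by
    intro hwe
    have : w ∈ f ∩ e := Finset.mem_inter.mpr ⟨hwf, hwe⟩
    rw [hfs] at this
    exact hwq (Finset.mem_singleton.mp this)
  by_contra hno
  push_neg at hno
  have hnoh : ∀ h ∈ E, p ∈ h → w ∉ h := by
    intro h hh hph hwh
    rcases eq_or_ne h e with rfl | hne
    · exact hwe hwh
    · exact absurd hwh (by simpa using hno h hh hne hph)
  -- greedy legs through the vertices of `e` other than `p, q`
  set D : Finset V := (e.erase p).erase q with hD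
  have hDsub : D ⊆ e := (Finset.erase_subset _ _).trans (Finset.erase_subset _ _)
  have hqD : q ∈ e.erase p := Finset.mem_erase.mpr ⟨fun h => hpq h.symm, hq⟩
  have hDcard : D.card = r - 2 := by
    rw [hD, Finset.card_erase_of_mem hqD, Finset.card_erase_of_mem hp, hecard]
    omega
  have hDp : p ∉ D := fun h => (Finset.mem_erase.mp (Finset.mem_erase.mp h).2).1 rfl
  have hDq : q ∉ D := fun h => (Finset.mem_erase.mp h).1 rfl
  set T : Finset V := f \ e with hT
  have hTe : ∀ x ∈ T, x ∉ e := fun x hx => (Finset.mem_sdiff.mp hx).2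
  have hTcard : T.card ≤ r - 1 := by
    have h1 : T ⊆ f.erase q := by
      intro z hz
      rw [hT, Finset.mem_sdiff] at hz
      exact Finset.mem_erase.mpr ⟨fun h => hz.2 (h ▸ hq), hz.1⟩
    calc T.card ≤ (f.erase q).card := Finset.card_le_card h1
      _ ≤ r - 1 := by rw [Finset.card_erase_of_mem hqf, hlin.1 f hf]
  obtain ⟨c, hc1, hc2⟩ := greedy hr hlin he hdeg T hTe hTcard D hDsub (le_of_eq hDcard)
  -- the banned set for the final leg through `p`
  set S : Finset V := (T ∪ D.biUnion (fun x => c x \ e)).erase w with hS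
  have hSoff : ∀ y ∈ S, y ∉ e := by
    intro y hy
    rcases Finset.mem_union.mp (Finset.mem_of_mem_erase hy) with hy | hy
    · exact hTe y hy
    · obtain ⟨x, hx, hy⟩ := Finset.mem_biUnion.mp hy
      exact (Finset.mem_sdiff.mp hy).2
  have hpS : p ∉ S := fun h => hSoff p h hp
  have hwT : w ∈ T := Finset.mem_sdiff.mpr ⟨hwf, hwe⟩
  have hcb : ∀ y ∈ D, (c y \ e).card ≤ r - 1 := by
    intro y hy
    have h1 : c y \ e ⊆ (c y).erase y := by
      intro z hz
      rw [Finset.mem_sdiff] at hz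
      exact Finset.mem_erase.mpr ⟨fun h => hz.2 (h ▸ hDsub hy), hz.1⟩
    calc (c y \ e).card ≤ ((c y).erase y).card := Finset.card_le_card h1
      _ ≤ r - 1 := by
          rw [Finset.card_erase_of_mem (hc1 y hy).2.1, hlin.1 _ (hc1 y hy).1]
  have hScard : S.card + 1 < degree E p := by
    have h1 : S.card + 1 = (T ∪ D.biUnion (fun x => c x \ e)).card := by
      rw [hS, Finset.card_erase_of_mem (Finset.mem_union_left _ hwT)]
      have : 0 < (T ∪ D.biUnion (fun x => c x \ e)).card :=
        Finset.card_pos.mpr ⟨w, Finset.mem_union_left _ hwT⟩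
      omega
    have h2 : (T ∪ D.biUnion (fun x => c x \ e)).card ≤ (r - 1) + (r - 2) * (r - 1) := by
      calc (T ∪ D.biUnion (fun x => c x \ e)).card
          ≤ T.card + (D.biUnion (fun x => c x \ e)).card := Finset.card_union_le _ _
        _ ≤ (r - 1) + ∑ y ∈ D, (c y \ e).card :=
            Nat.add_le_add hTcard Finset.card_biUnion_le
        _ ≤ (r - 1) + (r - 2) * (r - 1) := by
            refine Nat.add_le_add_left ?_ _
            calc ∑ y ∈ D, (c y \ e).card ≤ ∑ _y ∈ D, (r - 1) := Finset.sum_le_sum hcb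
              _ = (r - 2) * (r - 1) := by rw [Finset.sum_const, smul_eq_mul, hDcard]
    rw [hdp]
    obtain ⟨k, rfl⟩ : ∃ k, r = k + 3 := ⟨r - 3, by omega⟩
    have h3 : (k + 3 - 1) + (k + 3 - 2) * (k + 3 - 1) = (k + 2) + (k + 1) * (k + 2) := rfl
    have h4 : (k + 3 - 1) ^ 2 = (k + 2) * (k + 2) := by
      rw [show k + 3 - 1 = k + 2 from rfl, sq]
    rw [h4]
    rw [h3] at h2
    nlinarith [h1, h2]
  obtain ⟨h0, hh0E, hph0, hh0e, hh0S⟩ := exists_good hlin he S hpS hScard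
  have hwh0 : w ∉ h0 := hnoh h0 hh0E hph0
  -- assemble the crown
  have hh0s : h0 ∩ e = {p} := inter_singleton hlin hh0E he hh0e hph0 hp
  have hcs : ∀ x ∈ D, c x ∩ e = {x} := fun x hx =>
    inter_singleton hlin (hc1 x hx).1 he (hc1 x hx).2.2.1 (hc1 x hx).2.1 (hDsub hx)
  have hnotS : ∀ y, y ∈ h0 → y ∈ S → False := by
    intro y h1 h2
    have : y ∈ h0 ∩ S := Finset.mem_inter.mpr ⟨h1, h2⟩
    rw [hh0S] at this
    exact absurd this (Finset.notMem_empty y)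
  have d1 : h0 ∩ f = ∅ := by
    refine disj_of hh0s hfs hpq ?_
    intro y hy1 hy2 hy3
    rcases eq_or_ne y w with hyw | hyw
    · rw [hyw] at hy1; exact hwh0 hy1
    · exact hnotS y hy1 (Finset.mem_erase.mpr ⟨hyw,
        Finset.mem_union_left _ (Finset.mem_sdiff.mpr ⟨hy2, hy3⟩)⟩)
  have d2 : ∀ x ∈ D, h0 ∩ c x = ∅ := by
    intro x hx
    refine disj_of hh0s (hcs x hx) (fun h => hDp (h ▸ hx)) ?_
    intro y hy1 hy2 hy3
    rcases eq_or_ne y w with hyw | hyw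
    · rw [hyw] at hy2
      have : w ∈ c x ∩ T := Finset.mem_inter.mpr ⟨hy2, hwT⟩
      rw [(hc1 x hx).2.2.2] at this
      exact absurd this (Finset.notMem_empty w)
    · exact hnotS y hy1 (Finset.mem_erase.mpr ⟨hyw, Finset.mem_union_right _
        (Finset.mem_biUnion.mpr ⟨x, hx, Finset.mem_sdiff.mpr ⟨hy2, hy3⟩⟩)⟩)
  have d3 : ∀ x ∈ D, f ∩ c x = ∅ := by
    intro x hx
    refine disj_of hfs (hcs x hx) (fun h => hDq (h ▸ hx)) ?_
    intro y hy1 hy2 hy3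
    have : y ∈ c x ∩ T := Finset.mem_inter.mpr ⟨hy2, Finset.mem_sdiff.mpr ⟨hy1, hy3⟩⟩
    rw [(hc1 x hx).2.2.2] at this
    exact absurd this (Finset.notMem_empty y)
  set G : V → Finset V := fun x => if x = p then h0 else if x = q then f else c x with hG
  have hGp : G p = h0 := if_pos rfl
  have hGq : G q = f := by
    rw [hG]; dsimp only
    rw [if_neg (fun h => hpq h.symm), if_pos rfl]
  have hGD : ∀ x ∈ D, G x = c x := by
    intro x hx
    rw [hG]; dsimp only
    rw [if_neg (show ¬ x = p from fun h => hDp (by rw [← h]; exact hx)),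
      if_neg (show ¬ x = q from fun h => hDq (by rw [← h]; exact hx))]
  have hmemD : ∀ x ∈ e, x ≠ p → x ≠ q → x ∈ D :=
    fun x hx h1 h2 => Finset.mem_erase.mpr ⟨h2, Finset.mem_erase.mpr ⟨h1, hx⟩⟩
  refine hfree (crown_of hlin he u hmem hinj G ?_ ?_)
  · intro x hx
    by_cases h1 : x = p
    · rw [h1, hGp]; exact ⟨hh0E, hph0, hh0e⟩
    · by_cases h2 : x = q
      · rw [h2, hGq]; exact ⟨hf, hqf, hfne⟩
      · rw [hGD x (hmemD x hx h1 h2)]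
        exact ⟨(hc1 x (hmemD x hx h1 h2)).1, (hc1 x (hmemD x hx h1 h2)).2.1,
          (hc1 x (hmemD x hx h1 h2)).2.2.1⟩
  · intro x hx y hy hxy
    by_cases hx1 : x = p
    · by_cases hy1 : y = q
      · rw [hx1, hy1, hGp, hGq]; exact d1
      · have hyD : y ∈ D := hmemD y hy (fun h => hxy (hx1.trans h.symm)) hy1
        rw [hx1, hGp, hGD y hyD]; exact d2 y hyD
    · by_cases hx2 : x = q
      · by_cases hy1 : y = p
        · rw [hx2, hy1, hGq, hGp, Finset.inter_comm]; exact d1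
        · have hyD : y ∈ D := hmemD y hy hy1 (fun h => hxy (hx2.trans h.symm))
          rw [hx2, hGq, hGD y hyD]; exact d3 y hyD
      · have hxD : x ∈ D := hmemD x hx hx1 hx2
        by_cases hy1 : y = p
        · rw [hy1, hGp, hGD x hxD, Finset.inter_comm]; exact d2 x hxD
        · by_cases hy2 : y = q
          · rw [hy2, hGq, hGD x hxD, Finset.inter_comm]; exact d3 x hxD
          · have hyD : y ∈ D := hmemD y hy hy1 hy2
            rw [hGD x hxD, hGD y hyD]; exact hc2 x hxD y hyD hxy

end Partner

section Count
variable {V : Type*} [DecidableEq V] {r : ℕ} {E : Finset (Finset V)}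

/-- Each edge `f` through `q` (other than `e`) meets exactly `r - 1` of the
edges through `p` other than `e`. -/
lemma count_lemma (hr : 3 ≤ r) (hlin : IsLinear r E) (hfree : ¬ HasCrown r E)
    {e : Finset V} (he : e ∈ E) (u : Fin r → V) (hmem : ∀ i, u i ∈ e)
    (hinj : Function.Injective u)
    (hdeg : ∀ x ∈ e, (r - 1) ^ 2 ≤ degree E x)
    {p q : V} (hp : p ∈ e) (hq : q ∈ e) (hpq : p ≠ q)
    (hdp : degree E p = (r - 1) ^ 2 + 1)
    {f : Finset V} (hf : f ∈ E) (hqf : q ∈ f) (hfne : f ≠ e) :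
    ((E.filter (fun g => p ∈ g ∧ g ≠ e)).filter (fun g => (f ∩ g).Nonempty)).card = r - 1 := by
  have hfs : f ∩ e = {q} := inter_singleton hlin hf he hfne hqf hq
  have hpf : p ∉ f := by
    intro hpf
    have : p ∈ f ∩ e := Finset.mem_inter.mpr ⟨hpf, hp⟩
    rw [hfs] at this
    exact hpq (Finset.mem_singleton.mp this)
  have hgoal : ((E.filter (fun g => p ∈ g ∧ g ≠ e)).filter
      (fun g => (f ∩ g).Nonempty)).card = (f.erase q).card := by
    refine Finset.card_bij (fun g hg => ((Finset.mem_filter.mp hg).2).choose) ?_ ?_ ?_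
    · intro g hg
      have hne := (Finset.mem_filter.mp hg).2
      have hch := hne.choose_spec
      rw [Finset.mem_inter] at hch
      have hg2 := Finset.mem_filter.mp (Finset.mem_filter.mp hg).1
      refine Finset.mem_erase.mpr ⟨?_, hch.1⟩
      intro hchq
      have hqg : q ∈ g := hchq ▸ hch.2
      have : q ∈ g ∩ e := Finset.mem_inter.mpr ⟨hqg, hq⟩
      rw [inter_singleton hlin hg2.1 he hg2.2.2 hg2.2.1 hp] at this
      exact hpq (Finset.mem_singleton.mp this).symm
    · intro g1 hg1 g2 hg2 heq
      have hch1 := ((Finset.mem_filter.mp hg1).2).choose_spec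
      have hch2 := ((Finset.mem_filter.mp hg2).2).choose_spec
      rw [Finset.mem_inter] at hch1 hch2
      rw [heq] at hch1
      have hgm1 := Finset.mem_filter.mp (Finset.mem_filter.mp hg1).1
      have hgm2 := Finset.mem_filter.mp (Finset.mem_filter.mp hg2).1
      have hsp : ((Finset.mem_filter.mp hg2).2).choose ≠ p :=
        fun h => hpf (h ▸ hch2.1)
      exact two_mem_eq hlin hgm1.1 hgm2.1 (fun h => hsp h.symm)
        hgm1.2.1 hch1.2 hgm2.2.1 hch2.2
    · intro w hw
      rw [Finset.mem_erase] at hw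
      obtain ⟨h, hhE, hhne, hph, hwh⟩ := exists_partner hr hlin hfree he u hmem hinj hdeg
        hp hq hpq hdp hf hqf hfne hw.2 hw.1
      have hmemh : h ∈ (E.filter (fun g => p ∈ g ∧ g ≠ e)).filter
          (fun g => (f ∩ g).Nonempty) := by
        refine Finset.mem_filter.mpr ⟨Finset.mem_filter.mpr ⟨hhE, hph, hhne⟩, ?_⟩
        exact ⟨w, Finset.mem_inter.mpr ⟨hw.2, hwh⟩⟩
      refine ⟨h, hmemh, ?_⟩
      have hch := ((Finset.mem_filter.mp hmemh).2).choose_spec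
      have hfh : f ∩ h = {w} := by
        refine inter_singleton hlin hf hhE ?_ hw.2 hwh
        exact fun hfeq => hpf (hfeq ▸ hph)
      have h2 : ∀ z ∈ f ∩ h, z = w := by
        intro z hz
        rw [hfh] at hz
        exact Finset.mem_singleton.mp hz
      exact h2 _ hch
  rw [hgoal, Finset.card_erase_of_mem hqf, hlin.1 f hf]

end Count

section Kpart
variable {V : Type*} [DecidableEq V] {r : ℕ} {E : Finset (Finset V)}

lemma side_card {e : Finset V} (he : e ∈ E) {q : V} (hqe : q ∈ e)
    (hdq : degree E q = (r - 1) ^ 2 + 1) :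
    (E.filter (fun f => q ∈ f ∧ f ≠ e)).card = (r - 1) ^ 2 := by
  have h1 : E.filter (fun f => q ∈ f ∧ f ≠ e) = (E.filter (fun f => q ∈ f)).erase e := by
    ext g
    simp only [Finset.mem_filter, Finset.mem_erase]
    tauto
  rw [h1, Finset.card_erase_of_mem (Finset.mem_filter.mpr ⟨he, hqe⟩)]
  unfold degree at hdq
  omega

/-- The complete bipartite `K_{r-1,r-1}` between edges avoiding a greedy system. -/
lemma exists_K (hr : 3 ≤ r) (hlin : IsLinear r E) (hfree : ¬ HasCrown r E)
    {e : Finset V} (he : e ∈ E) (u : Fin r → V) (hmem : ∀ i, u i ∈ e)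
    (hinj : Function.Injective u)
    (hdeg : ∀ x ∈ e, (r - 1) ^ 2 ≤ degree E x)
    {p q : V} (hp : p ∈ e) (hq : q ∈ e) (hpq : p ≠ q)
    (hdp : degree E p = (r - 1) ^ 2 + 1) (hdq : degree E q = (r - 1) ^ 2 + 1) :
    ∃ A ⊆ E.filter (fun f => q ∈ f ∧ f ≠ e), ∃ B ⊆ E.filter (fun g => p ∈ g ∧ g ≠ e),
      (r - 1) ≤ A.card ∧ (r - 1) ≤ B.card ∧
      ∀ f ∈ A, ∀ g ∈ B, (f ∩ g).Nonempty := by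
  have hecard : e.card = r := hlin.1 e he
  set D : Finset V := (e.erase p).erase q with hD
  have hDsub : D ⊆ e := (Finset.erase_subset _ _).trans (Finset.erase_subset _ _)
  have hqD : q ∈ e.erase p := Finset.mem_erase.mpr ⟨fun h => hpq h.symm, hq⟩
  have hDcard : D.card = r - 2 := by
    rw [hD, Finset.card_erase_of_mem hqD, Finset.card_erase_of_mem hp, hecard]
    omega
  have hDp : p ∉ D := fun h => (Finset.mem_erase.mp (Finset.mem_erase.mp h).2).1 rfl
  have hDq : q ∉ D := fun h => (Finset.mem_erase.mp h).1 rfl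
  obtain ⟨c, hc1, hc2⟩ := greedy hr hlin he hdeg ∅ (by simp) (by simp) D hDsub
    (le_of_eq hDcard)
  set U : Finset V := D.biUnion (fun x => c x \ e) with hU
  have hUoff : ∀ y ∈ U, y ∉ e := by
    intro y hy
    obtain ⟨x, hx, hy⟩ := Finset.mem_biUnion.mp hy
    exact (Finset.mem_sdiff.mp hy).2
  have hcb : ∀ y ∈ D, (c y \ e).card ≤ r - 1 := by
    intro y hy
    have h1 : c y \ e ⊆ (c y).erase y := by
      intro z hz
      rw [Finset.mem_sdiff] at hz
      exact Finset.mem_erase.mpr ⟨fun h => hz.2 (h ▸ hDsub hy), hz.1⟩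
    calc (c y \ e).card ≤ ((c y).erase y).card := Finset.card_le_card h1
      _ ≤ r - 1 := by
          rw [Finset.card_erase_of_mem (hc1 y hy).2.1, hlin.1 _ (hc1 y hy).1]
  have hUcard : U.card ≤ (r - 2) * (r - 1) := by
    calc U.card ≤ ∑ y ∈ D, (c y \ e).card := Finset.card_biUnion_le
      _ ≤ ∑ _y ∈ D, (r - 1) := Finset.sum_le_sum hcb
      _ = (r - 2) * (r - 1) := by rw [Finset.sum_const, smul_eq_mul, hDcard]
  -- the two sides
  have side_bound : ∀ z ∈ e, degree E z = (r - 1) ^ 2 + 1 →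
      (r - 1) ≤ ((E.filter (fun f => z ∈ f ∧ f ≠ e)).filter
        (fun f => f ∩ U = ∅)).card := by
    intro z hze hdz
    have hzU : z ∉ U := fun h => hUoff z h hze
    have hsplit := Finset.card_filter_add_card_filter_not
      (s := E.filter (fun f => z ∈ f ∧ f ≠ e)) (p := fun f => f ∩ U = ∅)
    have hbadsub : (E.filter (fun f => z ∈ f ∧ f ≠ e)).filter (fun f => ¬ (f ∩ U = ∅)) ⊆
        E.filter (fun h => z ∈ h ∧ (h ∩ U).Nonempty) := by
      intro h hh
      rw [Finset.mem_filter] at hh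
      have h1 := Finset.mem_filter.mp hh.1
      exact Finset.mem_filter.mpr ⟨h1.1, h1.2.1, Finset.nonempty_iff_ne_empty.mpr hh.2⟩
    have hbad := le_trans (Finset.card_le_card hbadsub) (banned_le hlin z U hzU)
    have hside := side_card he hze hdz
    rw [hside] at hsplit
    obtain ⟨k, rfl⟩ : ∃ k, r = k + 3 := ⟨r - 3, by omega⟩
    have e1 : (k + 3 - 2) * (k + 3 - 1) = (k + 1) * (k + 2) := rfl
    have e2 : (k + 3 - 1) ^ 2 = (k + 2) * (k + 2) := by
      rw [show k + 3 - 1 = k + 2 from rfl, sq]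
    rw [e1] at hUcard
    rw [e2] at hsplit
    have : (k + 3 - 1) = k + 2 := rfl
    rw [this]
    nlinarith [hsplit, hbad, hUcard]
  refine ⟨(E.filter (fun f => q ∈ f ∧ f ≠ e)).filter (fun f => f ∩ U = ∅),
    Finset.filter_subset _ _,
    (E.filter (fun g => p ∈ g ∧ g ≠ e)).filter (fun g => g ∩ U = ∅),
    Finset.filter_subset _ _, side_bound q hq hdq, side_bound p hp hdp, ?_⟩
  -- completeness
  intro f' hf' g' hg'
  rw [Finset.mem_filter] at hf' hg'
  have hf'm := Finset.mem_filter.mp hf'.1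
  have hg'm := Finset.mem_filter.mp hg'.1
  by_contra hcon
  have hdisj0 : f' ∩ g' = ∅ := Finset.not_nonempty_iff_eq_empty.mp hcon
  have hf's : f' ∩ e = {q} := inter_singleton hlin hf'm.1 he hf'm.2.2 hf'm.2.1 hq
  have hg's : g' ∩ e = {p} := inter_singleton hlin hg'm.1 he hg'm.2.2 hg'm.2.1 hp
  have hcs : ∀ x ∈ D, c x ∩ e = {x} := fun x hx =>
    inter_singleton hlin (hc1 x hx).1 he (hc1 x hx).2.2.1 (hc1 x hx).2.1 (hDsub hx)
  have d1 : g' ∩ f' = ∅ := by rw [Finset.inter_comm]; exact hdisj0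
  have d2 : ∀ x ∈ D, g' ∩ c x = ∅ := by
    intro x hx
    refine disj_of hg's (hcs x hx) (fun h => hDp (h ▸ hx)) ?_
    intro y hy1 hy2 hy3
    have hyU : y ∈ U := Finset.mem_biUnion.mpr ⟨x, hx, Finset.mem_sdiff.mpr ⟨hy2, hy3⟩⟩
    have : y ∈ g' ∩ U := Finset.mem_inter.mpr ⟨hy1, hyU⟩
    rw [hg'.2] at this
    exact absurd this (Finset.notMem_empty y)
  have d3 : ∀ x ∈ D, f' ∩ c x = ∅ := by
    intro x hx
    refine disj_of hf's (hcs x hx) (fun h => hDq (h ▸ hx)) ?_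
    intro y hy1 hy2 hy3
    have hyU : y ∈ U := Finset.mem_biUnion.mpr ⟨x, hx, Finset.mem_sdiff.mpr ⟨hy2, hy3⟩⟩
    have : y ∈ f' ∩ U := Finset.mem_inter.mpr ⟨hy1, hyU⟩
    rw [hf'.2] at this
    exact absurd this (Finset.notMem_empty y)
  set G : V → Finset V := fun x => if x = p then g' else if x = q then f' else c x with hG
  have hGp : G p = g' := if_pos rfl
  have hGq : G q = f' := by
    rw [hG]; dsimp only
    rw [if_neg (fun h => hpq h.symm), if_pos rfl]
  have hGD : ∀ x ∈ D, G x = c x := by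
    intro x hx
    rw [hG]; dsimp only
    rw [if_neg (show ¬ x = p from fun h => hDp (by rw [← h]; exact hx)),
      if_neg (show ¬ x = q from fun h => hDq (by rw [← h]; exact hx))]
  have hmemD : ∀ x ∈ e, x ≠ p → x ≠ q → x ∈ D :=
    fun x hx h1 h2 => Finset.mem_erase.mpr ⟨h2, Finset.mem_erase.mpr ⟨h1, hx⟩⟩
  refine hfree (crown_of hlin he u hmem hinj G ?_ ?_)
  · intro x hx
    by_cases h1 : x = p
    · rw [h1, hGp]; exact ⟨hg'm.1, hg'm.2.1, hg'm.2.2⟩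
    · by_cases h2 : x = q
      · rw [h2, hGq]; exact ⟨hf'm.1, hf'm.2.1, hf'm.2.2⟩
      · rw [hGD x (hmemD x hx h1 h2)]
        exact ⟨(hc1 x (hmemD x hx h1 h2)).1, (hc1 x (hmemD x hx h1 h2)).2.1,
          (hc1 x (hmemD x hx h1 h2)).2.2.1⟩
  · intro x hx y hy hxy
    by_cases hx1 : x = p
    · by_cases hy1 : y = q
      · rw [hx1, hy1, hGp, hGq]; exact d1
      · have hyD : y ∈ D := hmemD y hy (fun h => hxy (hx1.trans h.symm)) hy1
        rw [hx1, hGp, hGD y hyD]; exact d2 y hyD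
    · by_cases hx2 : x = q
      · by_cases hy1 : y = p
        · rw [hx2, hy1, hGq, hGp, Finset.inter_comm]; exact d1
        · have hyD : y ∈ D := hmemD y hy hy1 (fun h => hxy (hx2.trans h.symm))
          rw [hx2, hGq, hGD y hyD]; exact d3 y hyD
      · have hxD : x ∈ D := hmemD x hx hx1 hx2
        by_cases hy1 : y = p
        · rw [hy1, hGp, hGD x hxD, Finset.inter_comm]; exact d2 x hxD
        · by_cases hy2 : y = q
          · rw [hy2, hGq, hGD x hxD, Finset.inter_comm]; exact d3 x hxD
          · have hyD : y ∈ D := hmemD y hy hy1 hy2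
            rw [hGD x hxD, hGD y hyD]; exact hc2 x hxD y hyD hxy

end Kpart

/-- The auxiliary bipartite graph `H_2` between the `u_2`-edges (other than `e`) and the
`u_1`-edges (other than `e`), with adjacency given by nonempty intersection, is
`(r-1)`-regular with both sides of size `(r-1)^2`, and contains a `K_{r-1,r-1}`. -/
theorem auxiliary_bipartite {V : Type*} [DecidableEq V] [Fintype V]
    (r : ℕ) (hr : 3 ≤ r) (E : Finset (Finset V)) (hlin : IsLinear r E)
    (hfree : ¬ HasCrown r E)
    (e : Finset V) (he : e ∈ E) (u : Fin r → V)
    (hinj : Function.Injective u) (hmem : ∀ i, u i ∈ e)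
    (hd1 : degree E (u ⟨0, by omega⟩) = (r - 1) ^ 2 + 1)
    (hd2 : degree E (u ⟨1, by omega⟩) = (r - 1) ^ 2 + 1)
    (hdi : ∀ i : Fin r, 2 ≤ (i : ℕ) → (r - 1) ^ 2 ≤ degree E (u i))
    (X Y : Finset (Finset V))
    (hX : X = E.filter (fun f => u ⟨1, by omega⟩ ∈ f ∧ f ≠ e))
    (hY : Y = E.filter (fun f => u ⟨0, by omega⟩ ∈ f ∧ f ≠ e)) :
    X.card = (r - 1) ^ 2 ∧ Y.card = (r - 1) ^ 2 ∧
    (∀ f ∈ X, (Y.filter (fun g => (f ∩ g).Nonempty)).card = r - 1) ∧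
    (∀ g ∈ Y, (X.filter (fun f => (f ∩ g).Nonempty)).card = r - 1) ∧
    (∃ A ⊆ X, ∃ B ⊆ Y, A.card = r - 1 ∧ B.card = r - 1 ∧
      ∀ f ∈ A, ∀ g ∈ B, (f ∩ g).Nonempty) := by
  subst hX hY
  have hecard : e.card = r := hlin.1 e he
  have husurj : ∀ x ∈ e, ∃ i, u i = x := by
    have himg : Finset.image u Finset.univ = e := by
      refine Finset.eq_of_subset_of_card_le ?_ ?_
      · intro x hx
        obtain ⟨i, _, rfl⟩ := Finset.mem_image.mp hx
        exact hmem i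
      · rw [Finset.card_image_of_injective _ hinj, Finset.card_univ, Fintype.card_fin,
          hecard]
    intro x hx
    rw [← himg] at hx
    obtain ⟨i, _, hi⟩ := Finset.mem_image.mp hx
    exact ⟨i, hi⟩
  have hdeg : ∀ x ∈ e, (r - 1) ^ 2 ≤ degree E x := by
    intro x hx
    obtain ⟨i, rfl⟩ := husurj x hx
    by_cases h2 : 2 ≤ (i : ℕ)
    · exact hdi i h2
    · have h01 : (i : ℕ) = 0 ∨ (i : ℕ) = 1 := by omega
      rcases h01 with h | h
      · calc (r - 1) ^ 2 ≤ (r - 1) ^ 2 + 1 := Nat.le_succ _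
          _ = degree E (u i) := by
            rw [show i = (⟨0, by omega⟩ : Fin r) from Fin.ext h]
            exact hd1.symm
      · calc (r - 1) ^ 2 ≤ (r - 1) ^ 2 + 1 := Nat.le_succ _
          _ = degree E (u i) := by
            rw [show i = (⟨1, by omega⟩ : Fin r) from Fin.ext h]
            exact hd2.symm
  have hpq : u ⟨0, by omega⟩ ≠ u ⟨1, by omega⟩ := by
    intro h
    have := hinj h
    simp [Fin.ext_iff] at this
  have hp : u ⟨0, by omega⟩ ∈ e := hmem _
  have hq : u ⟨1, by omega⟩ ∈ e := hmem _
  refine ⟨side_card he hq hd2, side_card he hp hd1, ?_, ?_, ?_⟩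
  · intro f hf
    have hfm := Finset.mem_filter.mp hf
    exact count_lemma hr hlin hfree he u hmem hinj hdeg hp hq hpq hd1 hfm.1
      hfm.2.1 hfm.2.2
  · intro g hg
    have hgm := Finset.mem_filter.mp hg
    have hcomm : (E.filter (fun f => u ⟨1, by omega⟩ ∈ f ∧ f ≠ e)).filter
        (fun f => (f ∩ g).Nonempty) =
        (E.filter (fun f => u ⟨1, by omega⟩ ∈ f ∧ f ≠ e)).filter
        (fun f => (g ∩ f).Nonempty) := by
      apply Finset.filter_congr
      intro x _
      rw [Finset.inter_comm]
    rw [hcomm]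
    exact count_lemma hr hlin hfree he u hmem hinj hdeg hq hp (fun h => hpq h.symm) hd2
      hgm.1 hgm.2.1 hgm.2.2
  · obtain ⟨A, hAX, B, hBY, hAcard, hBcard, hcomp⟩ :=
      exists_K hr hlin hfree he u hmem hinj hdeg hp hq hpq hd1 hd2
    obtain ⟨A', hA'A, hA'card⟩ := Finset.exists_subset_card_eq hAcard
    obtain ⟨B', hB'B, hB'card⟩ := Finset.exists_subset_card_eq hBcard
    exact ⟨A', hA'A.trans hAX, B', hB'B.trans hBY, hA'card, hB'card,
      fun f hf g hg => hcomp f (hA'A hf) g (hB'B hg)⟩
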